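/- Let f_ν^α be the AST density with location μ, scale σ, skewness α ∈ (0,1) and ν ≥ 1 degrees of freedom. Then D(f_ν^α ‖ f_{ν+1}^α) = D(f_ν^{1/2} ‖ f_{ν+1}^{1/2}); that is, the Kullback–Leibler divergence between AST densities with consecutive degrees of freedom does not depend on the skewness parameter α. -/

import Mathlib

open Real MeasureTheory Filter Topology

noncomputable def K (ν : ℝ) : ℝ := Real.Gamma ((ν+1)/2) / (Real.sqrt (π * ν) * Real.Gamma (ν/2))

noncomputable def ast (α ν μ σ x : ℝ) : ℝ :=
  if x ≤ μ then (K ν / σ) * (1 + (1/ν) * ((x-μ)/(2*α*σ))^2) ^ (-(ν+1)/2)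
  else (K ν / σ) * (1 + (1/ν) * ((x-μ)/(2*(1-α)*σ))^2) ^ (-(ν+1)/2)

noncomputable def tdens (ν y : ℝ) : ℝ := K ν * (1 + y^2/ν) ^ (-(ν+1)/2)

namespace AstKL

open Set

lemma K_pos {ν : ℝ} (hν : 0 < ν) : 0 < K ν := by
  unfold K
  have h1 : 0 < Real.Gamma ((ν+1)/2) := Real.Gamma_pos_of_pos (by linarith)
  have h2 : 0 < Real.Gamma (ν/2) := Real.Gamma_pos_of_pos (by linarith)
  have h3 : 0 < Real.sqrt (π * ν) := Real.sqrt_pos.mpr (mul_pos Real.pi_pos hν)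
  positivity

lemma tdens_pos {ν : ℝ} (hν : 0 < ν) (t : ℝ) : 0 < tdens ν t := by
  unfold tdens
  have h1 : (0:ℝ) < 1 + t^2/ν := by positivity
  exact mul_pos (K_pos hν) (Real.rpow_pos_of_pos h1 _)

lemma tdens_neg_arg (ν t : ℝ) : tdens ν (-t) = tdens ν t := by
  simp [tdens, neg_sq]

/-- The KL integrand for the standard symmetric t density. -/
noncomputable def G (ν t : ℝ) : ℝ := tdens ν t * Real.log (tdens ν t / tdens (ν+1) t)

lemma G_neg_arg (ν t : ℝ) : G ν (-t) = G ν t := by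
  simp [G, tdens_neg_arg]

lemma G_measurable (ν : ℝ) : Measurable (G ν) := by
  have m1 : Measurable (tdens ν) := by unfold tdens; fun_prop
  have m2 : Measurable (tdens (ν+1)) := by unfold tdens; fun_prop
  exact m1.mul (Real.measurable_log.comp (m1.div m2))

lemma G_integrable {ν : ℝ} (hν : 1 ≤ ν) : Integrable (G ν) := by
  have hν0 : 0 < ν := lt_of_lt_of_le one_pos hν
  have hK1 : 0 < K ν := K_pos hν0
  have hK2 : 0 < K (ν+1) := K_pos (by linarith)
  set C0 : ℝ := |Real.log (K ν) - Real.log (K (ν+1))| with hC0def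
  set D : ℝ := (2*ν+3)/2 with hDdef
  have hC0 : 0 ≤ C0 := abs_nonneg _
  have hD : 0 < D := by rw [hDdef]; linarith
  set M : ℝ := K ν * (C0 + 4*D) * ν ^ ((3:ℝ)/4) with hMdef
  have hint : Integrable (fun x : ℝ => M * (1+x^2) ^ (-(3:ℝ)/4)) := by
    have h := integrable_rpow_neg_one_add_norm_sq (E := ℝ) (μ := volume) (r := 3/2)
      (by simp only [Module.finrank_self]; norm_num)
    have he : ∀ x : ℝ, ((1:ℝ) + ‖x‖^2) ^ (-(3/2 : ℝ)/2) = (1+x^2) ^ (-(3:ℝ)/4) := by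
      intro x
      rw [Real.norm_eq_abs, sq_abs]
      norm_num
    simpa only [he] using h.const_mul M
  refine hint.mono' (G_measurable ν).aestronglyMeasurable (Eventually.of_forall fun t => ?_)
  -- pointwise bound
  set a : ℝ := 1 + t^2/ν with hadef
  set b : ℝ := 1 + t^2/(ν+1) with hbdef
  have ha1 : 1 ≤ a := le_add_of_nonneg_right (by positivity)
  have ha0 : 0 < a := by linarith
  have hb1 : 1 ≤ b := le_add_of_nonneg_right (by positivity)
  have hb0 : 0 < b := by linarith
  have hba : b ≤ a := by
    rw [hadef, hbdef]
    gcongr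
    linarith
  have hloga : 0 ≤ Real.log a := Real.log_nonneg ha1
  have hlogb : 0 ≤ Real.log b := Real.log_nonneg hb1
  have hlogba : Real.log b ≤ Real.log a := Real.log_le_log hb0 hba
  have hra : (0:ℝ) < a ^ (-(ν+1)/2) := Real.rpow_pos_of_pos ha0 _
  have hrb : (0:ℝ) < b ^ (-(ν+1+1)/2) := Real.rpow_pos_of_pos hb0 _
  have hGt : G ν t = (K ν * a ^ (-(ν+1)/2)) *
      ((Real.log (K ν) - Real.log (K (ν+1)))
        + ((-(ν+1)/2) * Real.log a - (-(ν+1+1)/2) * Real.log b)) := by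
    unfold G tdens
    rw [← hadef, ← hbdef]
    rw [Real.log_div (by positivity) (by positivity),
      Real.log_mul hK1.ne' hra.ne', Real.log_mul hK2.ne' hrb.ne',
      Real.log_rpow ha0, Real.log_rpow hb0]
    ring
  have habs : |(Real.log (K ν) - Real.log (K (ν+1)))
        + ((-(ν+1)/2) * Real.log a - (-(ν+1+1)/2) * Real.log b)| ≤ C0 + D * Real.log a := by
    have h1 := abs_add_le (Real.log (K ν) - Real.log (K (ν+1)))
      ((-(ν+1)/2) * Real.log a - (-(ν+1+1)/2) * Real.log b)
    have h2 : |(-(ν+1)/2) * Real.log a - (-(ν+1+1)/2) * Real.log b|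
        ≤ ((ν+1)/2) * Real.log a + ((ν+2)/2) * Real.log b := by
      have := abs_sub ((-(ν+1)/2) * Real.log a) ((-(ν+1+1)/2) * Real.log b)
      rw [abs_mul, abs_mul, abs_of_nonneg hloga, abs_of_nonneg hlogb] at this
      have e1 : |(-(ν+1)/2)| = (ν+1)/2 := by rw [abs_of_nonpos (by linarith)]; ring
      have e2 : |(-(ν+1+1)/2)| = (ν+2)/2 := by rw [abs_of_nonpos (by linarith)]; ring
      rw [e1, e2] at this
      exact this
    have h3 : ((ν+1)/2) * Real.log a + ((ν+2)/2) * Real.log b ≤ D * Real.log a := by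
      rw [hDdef]
      nlinarith [hlogba, hlogb]
    calc _ ≤ C0 + |(-(ν+1)/2) * Real.log a - (-(ν+1+1)/2) * Real.log b| := h1
    _ ≤ C0 + (((ν+1)/2) * Real.log a + ((ν+2)/2) * Real.log b) := by linarith
    _ ≤ C0 + D * Real.log a := by linarith
  have key : a ^ (-(ν+1)/2) * (C0 + D * Real.log a) ≤ (C0 + 4*D) * a ^ (-(3:ℝ)/4) := by
    have s1 : a ^ (-(ν+1)/2) ≤ a ^ (-(3:ℝ)/4) :=
      Real.rpow_le_rpow_of_exponent_le ha1 (by linarith)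
    have s2 : a ^ (-(ν+1)/2) * Real.log a ≤ 4 * a ^ (-(3:ℝ)/4) := by
      have hl : Real.log a ≤ 4 * a ^ ((1:ℝ)/4) := by
        have := Real.log_le_rpow_div ha0.le (show (0:ℝ) < 1/4 by norm_num)
        calc Real.log a ≤ a ^ ((1:ℝ)/4) / (1/4) := this
        _ = 4 * a ^ ((1:ℝ)/4) := by ring
      calc a ^ (-(ν+1)/2) * Real.log a ≤ a ^ (-(ν+1)/2) * (4 * a ^ ((1:ℝ)/4)) :=
            mul_le_mul_of_nonneg_left hl hra.le
      _ = 4 * a ^ (-(ν+1)/2 + (1:ℝ)/4) := by rw [Real.rpow_add ha0]; ring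
      _ ≤ 4 * a ^ (-(3:ℝ)/4) := by
            have := Real.rpow_le_rpow_of_exponent_le ha1
              (show -(ν+1)/2 + (1:ℝ)/4 ≤ -(3:ℝ)/4 by linarith)
            linarith
    calc a ^ (-(ν+1)/2) * (C0 + D * Real.log a)
        = C0 * a ^ (-(ν+1)/2) + D * (a ^ (-(ν+1)/2) * Real.log a) := by ring
    _ ≤ C0 * a ^ (-(3:ℝ)/4) + D * (4 * a ^ (-(3:ℝ)/4)) := by
        have := mul_le_mul_of_nonneg_left s1 hC0
        have := mul_le_mul_of_nonneg_left s2 hD.le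
        linarith
    _ = (C0 + 4*D) * a ^ (-(3:ℝ)/4) := by ring
  have hcomp : a ^ (-(3:ℝ)/4) ≤ ν ^ ((3:ℝ)/4) * (1+t^2) ^ (-(3:ℝ)/4) := by
    have hle : (1+t^2)/ν ≤ a := by
      have h1ν : 1/ν ≤ 1 := by rw [div_le_one hν0]; linarith
      calc (1+t^2)/ν = 1/ν + t^2/ν := by ring
      _ ≤ 1 + t^2/ν := by linarith
      _ = a := hadef.symm
    have hpos : (0:ℝ) < (1+t^2)/ν := by positivity
    have s3 : a ^ (-(3:ℝ)/4) ≤ ((1+t^2)/ν) ^ (-(3:ℝ)/4) :=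
      Real.rpow_le_rpow_of_nonpos hpos hle (by norm_num)
    have hν34 : ν ^ (-(3:ℝ)/4) = (ν ^ ((3:ℝ)/4))⁻¹ := by
      rw [show (-(3:ℝ)/4) = -((3:ℝ)/4) by ring, Real.rpow_neg hν0.le]
    have : ((1+t^2)/ν) ^ (-(3:ℝ)/4) = ν ^ ((3:ℝ)/4) * (1+t^2) ^ (-(3:ℝ)/4) := by
      rw [Real.div_rpow (by positivity) hν0.le, hν34]
      field_simp
    linarith [s3, this.ge]
  -- assemble
  rw [Real.norm_eq_abs, hGt, abs_mul, abs_of_pos (by positivity : (0:ℝ) < K ν * a ^ (-(ν+1)/2))]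
  calc K ν * a ^ (-(ν+1)/2) * |_root_.id ((Real.log (K ν) - Real.log (K (ν+1)))
        + ((-(ν+1)/2) * Real.log a - (-(ν+1+1)/2) * Real.log b))|
      = K ν * a ^ (-(ν+1)/2) * |(Real.log (K ν) - Real.log (K (ν+1)))
        + ((-(ν+1)/2) * Real.log a - (-(ν+1+1)/2) * Real.log b)| := rfl
  _ ≤ K ν * a ^ (-(ν+1)/2) * (C0 + D * Real.log a) := by
      apply mul_le_mul_of_nonneg_left habs (by positivity)
  _ = K ν * (a ^ (-(ν+1)/2) * (C0 + D * Real.log a)) := by ring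
  _ ≤ K ν * ((C0 + 4*D) * a ^ (-(3:ℝ)/4)) := mul_le_mul_of_nonneg_left key hK1.le
  _ ≤ K ν * ((C0 + 4*D) * (ν ^ ((3:ℝ)/4) * (1+t^2) ^ (-(3:ℝ)/4))) := by
      apply mul_le_mul_of_nonneg_left _ hK1.le
      exact mul_le_mul_of_nonneg_left hcomp (by linarith)
  _ = M * (1+t^2) ^ (-(3:ℝ)/4) := by rw [hMdef]; ring

lemma integral_Iic_comp_div {ν c : ℝ} (hc : 0 < c) :
    ∫ y in Iic (0:ℝ), G ν (y/c) = c * ∫ t in Ioi (0:ℝ), G ν t := by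
  have h := integral_comp_neg_Iic (0:ℝ) (fun y => G ν (-y / c))
  simp only [neg_neg, neg_zero] at h
  rw [h]
  have heven : ∀ x : ℝ, G ν (-x / c) = G ν (x / c) := by
    intro x; rw [neg_div, G_neg_arg]
  simp only [heven]
  have h2 := integral_comp_mul_right_Ioi (fun t => G ν t) 0 (inv_pos.mpr hc)
  simp only [zero_mul, inv_inv, smul_eq_mul] at h2
  simp only [div_eq_mul_inv]
  exact h2

lemma integral_Ioi_comp_div {ν c : ℝ} (hc : 0 < c) :
    ∫ y in Ioi (0:ℝ), G ν (y/c) = c * ∫ t in Ioi (0:ℝ), G ν t := by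
  have h2 := integral_comp_mul_right_Ioi (fun t => G ν t) 0 (inv_pos.mpr hc)
  simp only [zero_mul, inv_inv, smul_eq_mul] at h2
  simp only [div_eq_mul_inv]
  exact h2

lemma key (α ν μ σ : ℝ) (hα : α ∈ Set.Ioo (0:ℝ) 1) (hν : 1 ≤ ν) (hσ : 0 < σ) :
    ∫ x : ℝ, ast α ν μ σ x * Real.log (ast α ν μ σ x / ast α (ν+1) μ σ x)
      = 2 * ∫ t in Ioi (0:ℝ), G ν t := by
  obtain ⟨hα0, hα1⟩ := hα
  have hν0 : 0 < ν := lt_of_lt_of_le one_pos hν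
  set c₁ : ℝ := 2*α*σ with hc₁def
  set c₂ : ℝ := 2*(1-α)*σ with hc₂def
  have hc₁ : 0 < c₁ := by rw [hc₁def]; positivity
  have hc₂ : 0 < c₂ := by rw [hc₂def]; nlinarith
  set H : ℝ → ℝ := fun y => if y ≤ 0 then σ⁻¹ * G ν (y/c₁) else σ⁻¹ * G ν (y/c₂) with hHdef
  have hast : ∀ (ν' : ℝ) (x : ℝ), ast α ν' μ σ x =
      if x ≤ μ then σ⁻¹ * tdens ν' ((x-μ)/c₁) else σ⁻¹ * tdens ν' ((x-μ)/c₂) := by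
    intro ν' x
    unfold ast tdens
    by_cases hx : x ≤ μ
    · rw [if_pos hx, if_pos hx]
      have hb : (1:ℝ) + (1/ν') * ((x-μ)/(2*α*σ))^2 = 1 + ((x-μ)/c₁)^2/ν' := by
        rw [hc₁def]; ring
      rw [hb]; ring
    · rw [if_neg hx, if_neg hx]
      have hb : (1:ℝ) + (1/ν') * ((x-μ)/(2*(1-α)*σ))^2 = 1 + ((x-μ)/c₂)^2/ν' := by
        rw [hc₂def]; ring
      rw [hb]; ring
  have hpt : ∀ x : ℝ, ast α ν μ σ x * Real.log (ast α ν μ σ x / ast α (ν+1) μ σ x)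
      = H (x - μ) := by
    intro x
    have hσinv : (σ:ℝ)⁻¹ ≠ 0 := inv_ne_zero hσ.ne'
    by_cases hx : x ≤ μ
    · rw [hast ν x, hast (ν+1) x, if_pos hx, if_pos hx, hHdef]
      simp only [if_pos (sub_nonpos.mpr hx)]
      rw [mul_div_mul_left _ _ hσinv]
      unfold G; ring
    · rw [hast ν x, hast (ν+1) x, if_neg hx, if_neg hx, hHdef]
      simp only [if_neg (not_le.mpr (sub_pos.mpr (not_le.mp hx)))]
      rw [mul_div_mul_left _ _ hσinv]
      unfold G; ring
  simp only [hpt]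
  rw [integral_sub_right_eq_self H μ]
  -- split the integral
  have hG := G_integrable hν
  have hint1 : Integrable (fun y : ℝ => σ⁻¹ * G ν (y / c₁)) :=
    (hG.comp_div hc₁.ne').const_mul _
  have hint2 : Integrable (fun y : ℝ => σ⁻¹ * G ν (y / c₂)) :=
    (hG.comp_div hc₂.ne').const_mul _
  have hIic : IntegrableOn H (Iic (0:ℝ)) :=
    (hint1.integrableOn).congr_fun (fun y hy => (if_pos hy).symm) measurableSet_Iic
  have hIoi : IntegrableOn H (Ioi (0:ℝ)) :=
    (hint2.integrableOn).congr_fun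
      (fun y hy => (if_neg (not_le.mpr hy)).symm) measurableSet_Ioi
  have hsplit : ∫ y, H y = (∫ y in Iic (0:ℝ), H y) + ∫ y in Ioi (0:ℝ), H y := by
    rw [← setIntegral_union (Iic_disjoint_Ioi le_rfl) measurableSet_Ioi hIic hIoi,
      Iic_union_Ioi, setIntegral_univ]
  have e₁ : ∫ y in Iic (0:ℝ), H y = σ⁻¹ * (c₁ * ∫ t in Ioi (0:ℝ), G ν t) := by
    have e₁' : ∫ y in Iic (0:ℝ), H y = ∫ y in Iic (0:ℝ), σ⁻¹ * G ν (y/c₁) :=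
      setIntegral_congr_fun measurableSet_Iic (fun y hy => if_pos (mem_Iic.mp hy))
    rw [e₁', MeasureTheory.integral_const_mul, integral_Iic_comp_div hc₁]
  have e₂ : ∫ y in Ioi (0:ℝ), H y = σ⁻¹ * (c₂ * ∫ t in Ioi (0:ℝ), G ν t) := by
    have e₂' : ∫ y in Ioi (0:ℝ), H y = ∫ y in Ioi (0:ℝ), σ⁻¹ * G ν (y/c₂) :=
      setIntegral_congr_fun measurableSet_Ioi
        (fun y hy => if_neg (not_le.mpr (mem_Ioi.mp hy)))
    rw [e₂', MeasureTheory.integral_const_mul, integral_Ioi_comp_div hc₂]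
  rw [hsplit, e₁, e₂, hc₁def, hc₂def]
  field_simp
  ring

end AstKL

theorem ast_kl_independent_of_skewness (α ν μ σ : ℝ) (hα : α ∈ Set.Ioo (0:ℝ) 1)
    (hν : 1 ≤ ν) (hσ : 0 < σ) :
    ∫ x : ℝ, ast α ν μ σ x * Real.log (ast α ν μ σ x / ast α (ν+1) μ σ x)
      = ∫ x : ℝ, ast (1/2) ν μ σ x * Real.log (ast (1/2) ν μ σ x / ast (1/2) (ν+1) μ σ x) := by
  rw [AstKL.key α ν μ σ hα hν hσ,
    AstKL.key (1/2) ν μ σ (by constructor <;> norm_num) hν hσ]
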